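/- Partition the classes of K_{m,n} as M = M₁ ∪ M₂ and N = N₁ ∪ N₂ with |M_i| = m/2 and |N_i| = n/2; color edges between M_i and N_i red and all other edges blue. Then for every u ∈ M and v ∈ N, the number of alternating paths of length 2k+1 from u to v is at least (1+o(1))·(m/2)^k·(n/2)^k. Hence λ_{2k+1}(m,n) ≥ (1+o(1))·(mn/4)^k. -/

import Mathlib

/-- The 2-coloring of `K_{2m',2n'}`: edge between `i` and `j` is red (`true`) iff `i` and `j`
lie in matching halves (`M_1`–`N_1` or `M_2`–`N_2`). -/
def bcol (m' n' : ℕ) (i : Fin (2 * m')) (j : Fin (2 * n')) : Bool :=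
  decide ((i : ℕ) < m') == decide ((j : ℕ) < n')

/-- Injection of `Fin (q-1)` into the half `h` of `Fin (2*q)`, avoiding `v`. -/
def emb (q : ℕ) (v : Fin (2 * q)) (h : Bool) (x : Fin (q - 1)) : Fin (2 * q) :=
  ⟨(if h then 0 else q) +
      (if (x : ℕ) < (if decide ((v : ℕ) < q) = h then (v : ℕ) % q else q)
        then (x : ℕ) else (x : ℕ) + 1),
   by have hv := v.isLt; have hx := x.isLt; split_ifs <;> omega⟩

lemma emb_val (q : ℕ) (v : Fin (2 * q)) (h : Bool) (x : Fin (q - 1)) :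
    ((emb q v h x : Fin (2 * q)) : ℕ) =
    (if h then 0 else q) +
      (if (x : ℕ) < (if decide ((v : ℕ) < q) = h then (v : ℕ) % q else q)
        then (x : ℕ) else (x : ℕ) + 1) := rfl

lemma emb_half (q : ℕ) (v : Fin (2 * q)) (h : Bool) (x : Fin (q - 1)) :
    decide (((emb q v h x : Fin (2 * q)) : ℕ) < q) = h := by
  have hv := v.isLt; have hx := x.isLt
  rw [emb_val]
  cases h <;> by_cases hvq : (v : ℕ) < q <;>
    simp [hvq] <;> split_ifs <;> omega

lemma emb_ne (q : ℕ) (v : Fin (2 * q)) (h : Bool) (x : Fin (q - 1)) :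
    emb q v h x ≠ v := by
  have hv := v.isLt; have hx := x.isLt
  intro heq
  have hval := congrArg Fin.val heq
  rw [emb_val] at hval
  have hmod : (v : ℕ) % q = if (v : ℕ) < q then (v : ℕ) else (v : ℕ) - q := by
    split_ifs with h1
    · exact Nat.mod_eq_of_lt h1
    · have h2 : (v : ℕ) - q < q := by omega
      rw [Nat.mod_eq_sub_mod (le_of_not_gt h1), Nat.mod_eq_of_lt h2]
  cases h <;> by_cases hvq : (v : ℕ) < q <;>
    simp [hvq, hmod] at hval <;> split_ifs at hval <;> omega

lemma emb_inj (q : ℕ) (v : Fin (2 * q)) (h : Bool) {x y : Fin (q - 1)}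
    (heq : emb q v h x = emb q v h y) : x = y := by
  have hval := congrArg Fin.val heq
  rw [emb_val, emb_val] at hval
  apply Fin.ext
  split_ifs at hval <;> omega

/-- alternating sequence of halves -/
def altb (c : Bool) (r : ℕ) : Bool := xor c (decide (r % 2 = 0))

lemma altb_ne (c : Bool) {r s : ℕ} (h : ¬ (r % 2 = 0 ↔ s % 2 = 0)) :
    altb c r ≠ altb c s := by
  have hd : decide (r % 2 = 0) ≠ decide (s % 2 = 0) := fun hd => h (decide_eq_decide.mp hd)
  unfold altb
  cases c <;> simp_all

lemma altb_zero (c : Bool) : altb c 0 = !c := by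
  cases c <;> simp [altb]

lemma bne_left {a b : Bool} (c : Bool) (h : a ≠ b) : (a == c) ≠ (b == c) := by
  cases a <;> cases b <;> cases c <;> simp_all

lemma bne_right {a b : Bool} (c : Bool) (h : a ≠ b) : (c == a) ≠ (c == b) := by
  cases a <;> cases b <;> cases c <;> simp_all

lemma real_bound (k : ℕ) (δ : ℝ) (hδ : 0 < δ) (n : ℕ)
    (hn1 : k + 1 ≤ n) (hn2 : (k : ℝ) ^ 2 ≤ δ * n) :
    (1 - δ) * (n : ℝ) ^ k ≤ ((n - k : ℕ) : ℝ) ^ k := by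
  have hn0 : (0 : ℝ) < n := by
    have : 0 < n := by omega
    exact_mod_cast this
  have hkn : (k : ℝ) ≤ n := by exact_mod_cast (by omega : k ≤ n)
  have hcast : ((n - k : ℕ) : ℝ) = (n : ℝ) - k := by
    rw [Nat.cast_sub (by omega)]
  have hbern : 1 - (k : ℝ) ^ 2 / n ≤ (1 - (k : ℝ) / n) ^ k := by
    have h2 : (-2 : ℝ) ≤ -((k : ℝ) / n) := by
      have : (k : ℝ) / n ≤ 1 := by
        rw [div_le_one hn0]; exact hkn
      linarith
    have := one_add_mul_le_pow h2 k
    have he1 : 1 + (k : ℝ) * -((k : ℝ) / n) = 1 - (k : ℝ) ^ 2 / n := by ring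
    have he2 : (1 : ℝ) + -((k : ℝ) / n) = 1 - (k : ℝ) / n := by ring
    rw [he1, he2] at this
    exact this
  have hδn : 1 - δ ≤ 1 - (k : ℝ) ^ 2 / n := by
    have : (k : ℝ) ^ 2 / n ≤ δ := by
      rw [div_le_iff₀ hn0]; linarith [hn2]
    linarith
  have h1 : 1 - δ ≤ (1 - (k : ℝ) / n) ^ k := le_trans hδn hbern
  calc (1 - δ) * (n : ℝ) ^ k
      ≤ (1 - (k : ℝ) / n) ^ k * (n : ℝ) ^ k := by
        apply mul_le_mul_of_nonneg_right h1 (by positivity)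
    _ = ((1 - (k : ℝ) / n) * n) ^ k := by rw [mul_pow]
    _ = ((n - k : ℕ) : ℝ) ^ k := by
        rw [hcast]
        congr 1
        field_simp

theorem stmt13 (k : ℕ) (hk : 1 ≤ k) (ε : ℝ) (hε : 0 < ε) :
    ∃ C : ℕ, ∀ m' n' : ℕ, C ≤ m' → C ≤ n' → m' ≤ n' →
      ∀ (u : Fin (2 * m')) (v : Fin (2 * n')),
        (1 - ε) * (m' : ℝ) ^ k * (n' : ℝ) ^ k ≤
        ((Finset.univ.filter
          (fun p : (Fin k → Fin (2 * n')) × (Fin k → Fin (2 * m')) =>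
            Function.Injective p.1 ∧ Function.Injective p.2 ∧
            (∀ i, p.1 i ≠ v) ∧ (∀ i, p.2 i ≠ u) ∧
            bcol m' n' u (p.1 ⟨0, hk⟩) ≠ bcol m' n' (p.2 ⟨0, hk⟩) (p.1 ⟨0, hk⟩) ∧
            (∀ i : Fin k, ∀ h : (i : ℕ) + 1 < k,
              bcol m' n' (p.2 i) (p.1 i) ≠ bcol m' n' (p.2 i) (p.1 ⟨(i : ℕ) + 1, h⟩) ∧
              bcol m' n' (p.2 i) (p.1 ⟨(i : ℕ) + 1, h⟩)
                ≠ bcol m' n' (p.2 ⟨(i : ℕ) + 1, h⟩) (p.1 ⟨(i : ℕ) + 1, h⟩)) ∧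
            bcol m' n' (p.2 ⟨k - 1, by omega⟩) (p.1 ⟨k - 1, by omega⟩)
              ≠ bcol m' n' (p.2 ⟨k - 1, by omega⟩) v)).card : ℝ) := by
  classical
  set δ : ℝ := min (ε / 2) (1 / 2) with hδdef
  have hδpos : 0 < δ := lt_min (by linarith) (by norm_num)
  have hδhalf : δ ≤ 1 / 2 := min_le_right _ _
  have hδε : δ ≤ ε / 2 := min_le_left _ _
  refine ⟨k + 1 + ⌈(k : ℝ) ^ 2 / δ⌉₊, ?_⟩
  intro m' n' hm hn hmn u v
  -- numeric facts
  have hkm : k + 1 ≤ m' := by omega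
  have hkn : k + 1 ≤ n' := by omega
  have hkd : ∀ q : ℕ, k + 1 + ⌈(k : ℝ) ^ 2 / δ⌉₊ ≤ q → (k : ℝ) ^ 2 ≤ δ * q := by
    intro q hq
    have h1 : ((k : ℝ) ^ 2 / δ) ≤ (⌈(k : ℝ) ^ 2 / δ⌉₊ : ℝ) := Nat.le_ceil _
    have h2 : ((⌈(k : ℝ) ^ 2 / δ⌉₊ : ℕ) : ℝ) ≤ (q : ℝ) := by
      exact_mod_cast le_trans (by omega : ⌈(k : ℝ) ^ 2 / δ⌉₊ ≤ k + 1 + ⌈(k : ℝ) ^ 2 / δ⌉₊) hq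
    have := le_trans h1 h2
    calc (k : ℝ) ^ 2 = ((k : ℝ) ^ 2 / δ) * δ := by field_simp
      _ ≤ (q : ℝ) * δ := mul_le_mul_of_nonneg_right this (le_of_lt hδpos)
      _ = δ * q := by ring
  have hM : (1 - δ) * (m' : ℝ) ^ k ≤ ((m' - k : ℕ) : ℝ) ^ k :=
    real_bound k δ hδpos m' hkm (hkd m' hm)
  have hN : (1 - δ) * (n' : ℝ) ^ k ≤ ((n' - k : ℕ) : ℝ) ^ k :=
    real_bound k δ hδpos n' hkn (hkd n' hn)
  -- the injection
  set vh : Bool := decide ((v : ℕ) < n') with hvh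
  set uh : Bool := decide ((u : ℕ) < m') with huh
  set S := (Finset.univ.filter
          (fun p : (Fin k → Fin (2 * n')) × (Fin k → Fin (2 * m')) =>
            Function.Injective p.1 ∧ Function.Injective p.2 ∧
            (∀ i, p.1 i ≠ v) ∧ (∀ i, p.2 i ≠ u) ∧
            bcol m' n' u (p.1 ⟨0, hk⟩) ≠ bcol m' n' (p.2 ⟨0, hk⟩) (p.1 ⟨0, hk⟩) ∧
            (∀ i : Fin k, ∀ h : (i : ℕ) + 1 < k,
              bcol m' n' (p.2 i) (p.1 i) ≠ bcol m' n' (p.2 i) (p.1 ⟨(i : ℕ) + 1, h⟩) ∧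
              bcol m' n' (p.2 i) (p.1 ⟨(i : ℕ) + 1, h⟩)
                ≠ bcol m' n' (p.2 ⟨(i : ℕ) + 1, h⟩) (p.1 ⟨(i : ℕ) + 1, h⟩)) ∧
            bcol m' n' (p.2 ⟨k - 1, by omega⟩) (p.1 ⟨k - 1, by omega⟩)
              ≠ bcol m' n' (p.2 ⟨k - 1, by omega⟩) v)) with hS
  let Φ : (Fin k ↪ Fin (n' - 1)) × (Fin k ↪ Fin (m' - 1)) →
      (Fin k → Fin (2 * n')) × (Fin k → Fin (2 * m')) :=
    fun e => (fun i => emb n' v (altb vh (k - 1 - (i : ℕ))) (e.1 i),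
              fun i => emb m' u (altb uh (i : ℕ)) (e.2 i))
  have hmem : ∀ e, Φ e ∈ S := by
    intro e
    rw [hS, Finset.mem_filter]
    refine ⟨Finset.mem_univ _, ?_, ?_, ?_, ?_, ?_, ?_, ?_⟩
    · -- injectivity of first component
      intro i j hij
      have hhalf : altb vh (k - 1 - (i : ℕ)) = altb vh (k - 1 - (j : ℕ)) := by
        have := congrArg (fun z : Fin (2 * n') => decide ((z : ℕ) < n')) hij
        simpa only [Φ, emb_half] using this
      apply e.1.injective
      rw [show (Φ e).1 i = emb n' v (altb vh (k - 1 - (i : ℕ))) (e.1 i) from rfl,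
        show (Φ e).1 j = emb n' v (altb vh (k - 1 - (j : ℕ))) (e.1 j) from rfl, hhalf] at hij
      exact emb_inj n' v _ hij
    · -- injectivity of second component
      intro i j hij
      have hhalf : altb uh (i : ℕ) = altb uh (j : ℕ) := by
        have := congrArg (fun z : Fin (2 * m') => decide ((z : ℕ) < m')) hij
        simpa only [Φ, emb_half] using this
      apply e.2.injective
      rw [show (Φ e).2 i = emb m' u (altb uh (i : ℕ)) (e.2 i) from rfl,
        show (Φ e).2 j = emb m' u (altb uh (j : ℕ)) (e.2 j) from rfl, hhalf] at hij
      exact emb_inj m' u _ hij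
    · exact fun i => emb_ne n' v _ _
    · exact fun i => emb_ne m' u _ _
    · -- first alternation condition
      show bcol m' n' u (emb n' v _ _) ≠ bcol m' n' (emb m' u _ _) (emb n' v _ _)
      unfold bcol
      rw [emb_half, emb_half, ← huh]
      apply bne_left
      rw [show ((⟨0, hk⟩ : Fin k) : ℕ) = 0 from rfl, altb_zero]
      cases uh <;> simp
    · -- middle alternation conditions
      intro i hik
      constructor
      · show bcol m' n' (emb m' u _ _) (emb n' v _ _) ≠
          bcol m' n' (emb m' u _ _) (emb n' v _ _)
        unfold bcol
        rw [emb_half, emb_half, emb_half]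
        apply bne_right
        apply altb_ne
        have hi := i.isLt
        simp only [Fin.val_mk]
        omega
      · show bcol m' n' (emb m' u _ _) (emb n' v _ _) ≠
          bcol m' n' (emb m' u _ _) (emb n' v _ _)
        unfold bcol
        rw [emb_half, emb_half, emb_half]
        apply bne_left
        apply altb_ne
        have hi := i.isLt
        simp only [Fin.val_mk]
        omega
    · -- last alternation condition
      show bcol m' n' (emb m' u _ _) (emb n' v _ _) ≠ bcol m' n' (emb m' u _ _) v
      unfold bcol
      rw [emb_half, emb_half, ← hvh]
      apply bne_right
      rw [show ((⟨k - 1, by omega⟩ : Fin k) : ℕ) = k - 1 from rfl,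
        show k - 1 - (k - 1) = 0 from by omega, altb_zero]
      cases vh <;> simp
  have hinj : Set.InjOn Φ (Finset.univ : Finset ((Fin k ↪ Fin (n' - 1)) × (Fin k ↪ Fin (m' - 1)))) := by
    intro e1 _ e2 _ h
    have h1 : ∀ i : Fin k, emb n' v (altb vh (k - 1 - (i : ℕ))) (e1.1 i) =
        emb n' v (altb vh (k - 1 - (i : ℕ))) (e2.1 i) :=
      fun i => congrFun (congrArg Prod.fst h) i
    have h2 : ∀ i : Fin k, emb m' u (altb uh (i : ℕ)) (e1.2 i) =
        emb m' u (altb uh (i : ℕ)) (e2.2 i) :=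
      fun i => congrFun (congrArg Prod.snd h) i
    have hfst : e1.1 = e2.1 := DFunLike.ext _ _ fun i => emb_inj n' v _ (h1 i)
    have hsnd : e1.2 = e2.2 := DFunLike.ext _ _ fun i => emb_inj m' u _ (h2 i)
    exact Prod.ext hfst hsnd
  have hcard : (n' - 1).descFactorial k * (m' - 1).descFactorial k ≤ S.card := by
    have := Finset.card_le_card_of_injOn Φ (fun e _ => hmem e) hinj
    simpa [Finset.card_univ, Fintype.card_prod, Fintype.card_embedding_eq,
      Fintype.card_fin] using this
  -- now the chain of inequalities
  have hdM : (m' - k) ^ k ≤ (m' - 1).descFactorial k := by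
    have := Nat.pow_sub_le_descFactorial (m' - 1) k
    rwa [show m' - 1 + 1 - k = m' - k from by omega] at this
  have hdN : (n' - k) ^ k ≤ (n' - 1).descFactorial k := by
    have := Nat.pow_sub_le_descFactorial (n' - 1) k
    rwa [show n' - 1 + 1 - k = n' - k from by omega] at this
  have hεδ : 1 - ε ≤ (1 - δ) * (1 - δ) := by nlinarith
  have hmnn : (0 : ℝ) ≤ (m' : ℝ) ^ k * (n' : ℝ) ^ k := by positivity
  calc (1 - ε) * (m' : ℝ) ^ k * (n' : ℝ) ^ k
      = (1 - ε) * ((m' : ℝ) ^ k * (n' : ℝ) ^ k) := by ring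
    _ ≤ ((1 - δ) * (1 - δ)) * ((m' : ℝ) ^ k * (n' : ℝ) ^ k) :=
        mul_le_mul_of_nonneg_right hεδ hmnn
    _ = ((1 - δ) * (m' : ℝ) ^ k) * ((1 - δ) * (n' : ℝ) ^ k) := by ring
    _ ≤ ((m' - k : ℕ) : ℝ) ^ k * ((n' - k : ℕ) : ℝ) ^ k := by
        apply mul_le_mul hM hN
        · apply mul_nonneg (by linarith) (by positivity)
        · positivity
    _ ≤ ((m' - 1).descFactorial k : ℝ) * ((n' - 1).descFactorial k : ℝ) := by
        apply mul_le_mul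
        · exact_mod_cast Nat.cast_le.mpr hdM
        · exact_mod_cast Nat.cast_le.mpr hdN
        · positivity
        · positivity
    _ = (((n' - 1).descFactorial k * (m' - 1).descFactorial k : ℕ) : ℝ) := by
        push_cast; ring
    _ ≤ (S.card : ℝ) := by exact_mod_cast hcard
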